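/- Let φ be a nonconstant solution of the stationary Adkins–Nappi equation with boundary values φ(0)=0, φ(∞)=nπ for an integer n ≥ 1, whose associated quantity W(r) = r⁴φ'(r)² − 2r² sin²φ − (φ − sin φ cos φ)² satisfies W(0)=0 and W(∞)=−n²π². Then 0 < φ(r) < nπ for all r > 0. -/

import Mathlib

open Real Set

/-- The monotone quantity `W(r) = r⁴ φ'(r)² − 2r² sin²φ(r) − (φ(r) − sin φ(r) cos φ(r))²`. -/
noncomputable def Wfun (φ φ' : ℝ → ℝ) (r : ℝ) : ℝ :=
  r^4 * (φ' r)^2 - 2 * r^2 * Real.sin (φ r)^2 -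
    (φ r - Real.sin (φ r) * Real.cos (φ r))^2

lemma Wfun_hasDerivAt (φ φ' φ'' : ℝ → ℝ)
    (hd1 : ∀ r ∈ Set.Ioi (0:ℝ), HasDerivAt φ (φ' r) r)
    (hd2 : ∀ r ∈ Set.Ioi (0:ℝ), HasDerivAt φ' (φ'' r) r)
    (heq : ∀ r ∈ Set.Ioi (0:ℝ),
      φ'' r + (2/r) * φ' r =
        Real.sin (2 * φ r) / r^2 +
          (φ r - Real.sin (φ r) * Real.cos (φ r)) * (1 - Real.cos (2 * φ r)) / r^4)
    {r : ℝ} (hr : 0 < r) :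
    HasDerivAt (Wfun φ φ') (-4 * r * Real.sin (φ r)^2) r := by
  have h1 := hd1 r hr
  have h2 := hd2 r hr
  have H := (((hasDerivAt_pow 4 r).mul (h2.pow 2)).sub
      (((hasDerivAt_pow 2 r).const_mul 2).mul ((h1.sin).pow 2))).sub
      ((h1.sub (h1.sin.mul h1.cos)).pow 2)
  have hφ'' : φ'' r = Real.sin (2 * φ r) / r^2 +
      (φ r - Real.sin (φ r) * Real.cos (φ r)) * (1 - Real.cos (2 * φ r)) / r^4
      - (2/r) * φ' r := by linarith [heq r hr]
  show HasDerivAt (fun x => x^4 * (φ' x)^2 - 2 * x^2 * Real.sin (φ x)^2 -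
    (φ x - Real.sin (φ x) * Real.cos (φ x))^2) (-4 * r * Real.sin (φ r)^2) r
  refine HasDerivAt.congr_deriv H ?_
  rw [hφ'', Real.sin_two_mul, Real.cos_two_mul']
  have hr' : r ≠ 0 := ne_of_gt hr
  simp only [Pi.pow_apply, Pi.mul_apply, Pi.sub_apply]
  field_simp
  ring

lemma norm_pair (x y : ℝ) : ‖((x, y) : ℝ × ℝ)‖ = max |x| |y| := by
  simp [Prod.norm_def, Real.norm_eq_abs]

lemma g_gt (n : ℕ) (x : ℝ) (h : (n:ℝ) * π < x) :
    (n:ℝ) * π < x - Real.sin x * Real.cos x := by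
  have h2 : Real.sin (2*x) = Real.sin (2*(x - (n:ℝ)*π)) := by
    have he : 2*x = 2*(x - (n:ℝ)*π) + (n:ℤ) * (2*π) := by push_cast; ring
    rw [he, Real.sin_add_int_mul_two_pi]
  have h3 : Real.sin (2*(x - (n:ℝ)*π)) < 2*(x - (n:ℝ)*π) := Real.sin_lt (by linarith)
  have h4 : Real.sin (2*x) = 2 * Real.sin x * Real.cos x := Real.sin_two_mul x
  linarith

set_option maxHeartbeats 1000000 in
lemma ode_est (φ φ' φ'' : ℝ → ℝ)
    (heq : ∀ r ∈ Set.Ioi (0:ℝ),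
      φ'' r + (2/r) * φ' r =
        Real.sin (2 * φ r) / r^2 +
          (φ r - Real.sin (φ r) * Real.cos (φ r)) * (1 - Real.cos (2 * φ r)) / r^4)
    (c : ℝ) (m : ℤ) (hc : c = (m:ℝ) * π) (a : ℝ) (ha : 0 < a)
    {x : ℝ} (hx : a ≤ x) :
    ‖((φ' x, φ'' x) : ℝ × ℝ)‖ ≤
      (1 + 2/a + 2/a^2 + (2*|c| + 4)/a^4) * ‖((φ x - c, φ' x) : ℝ × ℝ)‖ := by
  have hx0 : 0 < x := lt_of_lt_of_le ha hx
  set ψ := φ x - c with hψ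
  have hsin2 : Real.sin (2 * φ x) = Real.sin (2 * ψ) := by
    have he : 2 * φ x = 2 * ψ + (m:ℝ) * (2 * π) := by rw [hψ, hc]; ring
    rw [he]; exact_mod_cast Real.sin_add_int_mul_two_pi (2*ψ) m
  have hcos2 : Real.cos (2 * φ x) = Real.cos (2 * ψ) := by
    have he : 2 * φ x = 2 * ψ + (m:ℝ) * (2 * π) := by rw [hψ, hc]; ring
    rw [he]; exact_mod_cast Real.cos_add_int_mul_two_pi (2*ψ) m
  have hsc : Real.sin (φ x) * Real.cos (φ x) = Real.sin ψ * Real.cos ψ := by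
    have e1 := Real.sin_two_mul (φ x)
    have e2 := Real.sin_two_mul ψ
    linarith [hsin2]
  have hg : φ x - Real.sin (φ x) * Real.cos (φ x) = c + (ψ - Real.sin ψ * Real.cos ψ) := by
    rw [hsc, hψ]; ring
  have hφ'' : φ'' x = Real.sin (2*ψ)/x^2 +
      (c + (ψ - Real.sin ψ * Real.cos ψ)) * (1 - Real.cos (2*ψ))/x^4 - (2/x) * φ' x := by
    have h := heq x hx0
    rw [hsin2, hcos2, hg] at h
    linarith
  rw [norm_pair, norm_pair]
  set N := max |ψ| |φ' x| with hN
  have hN0 : (0:ℝ) ≤ N := le_trans (abs_nonneg ψ) (le_max_left _ _)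
  have h1 : |ψ| ≤ N := by rw [hN]; exact le_max_left _ _
  have h2 : |φ' x| ≤ N := by rw [hN]; exact le_max_right _ _
  have hsψ : |Real.sin ψ| ≤ |ψ| := Real.abs_sin_le_abs
  have hs1 : |Real.sin ψ| ≤ 1 := abs_le.mpr ⟨Real.neg_one_le_sin ψ, Real.sin_le_one ψ⟩
  have h3 : |Real.sin (2*ψ)| ≤ 2 * |ψ| := by
    calc |Real.sin (2*ψ)| ≤ |2*ψ| := Real.abs_sin_le_abs
    _ = 2 * |ψ| := by rw [abs_mul]; norm_num
  have hcψ : 0 ≤ 1 - Real.cos (2*ψ) := by nlinarith [Real.cos_le_one (2*ψ)]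
  have hcb : 1 - Real.cos (2*ψ) ≤ 2 := by nlinarith [Real.neg_one_le_cos (2*ψ)]
  have hsq : Real.sin ψ ^ 2 ≤ |ψ| := by
    nlinarith [mul_le_mul hsψ hs1 (abs_nonneg _) (abs_nonneg _), sq_abs (Real.sin ψ)]
  have h4 : 1 - Real.cos (2*ψ) ≤ 2 * |ψ| := by
    have e1 : 1 - Real.cos (2*ψ) = 2 * Real.sin ψ ^ 2 := by
      rw [Real.cos_two_mul']
      linear_combination -Real.sin_sq_add_cos_sq ψ
    linarith
  have hsc' : |Real.sin ψ * Real.cos ψ| ≤ |ψ| := by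
    rw [abs_mul]
    calc |Real.sin ψ| * |Real.cos ψ| ≤ |ψ| * 1 :=
      mul_le_mul hsψ (Real.abs_cos_le_one ψ) (abs_nonneg _) (abs_nonneg _)
    _ = |ψ| := mul_one _
  have h5 : |ψ - Real.sin ψ * Real.cos ψ| ≤ 2 * |ψ| := by
    have := abs_sub ψ (Real.sin ψ * Real.cos ψ)
    linarith
  -- term bounds
  have hT1 : |Real.sin (2*ψ)/x^2| ≤ 2/a^2 * N := by
    rw [abs_div, abs_of_nonneg (by positivity : (0:ℝ) ≤ x^2)]
    calc |Real.sin (2*ψ)| / x^2 ≤ (2*N) / a^2 := by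
          have hx2 : a^2 ≤ x^2 := pow_le_pow_left₀ ha.le hx 2
          exact div_le_div₀ (by positivity) (by linarith) (by positivity) hx2
    _ = 2/a^2 * N := by ring
  have hT2num : |(c + (ψ - Real.sin ψ * Real.cos ψ)) * (1 - Real.cos (2*ψ))| ≤ (2*|c| + 4) * |ψ| := by
    rw [abs_mul, abs_of_nonneg hcψ]
    have hadd : |c + (ψ - Real.sin ψ * Real.cos ψ)| ≤ |c| + 2*|ψ| :=
      (abs_add_le c _).trans (by linarith)
    calc |c + (ψ - Real.sin ψ * Real.cos ψ)| * (1 - Real.cos (2*ψ))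
        ≤ (|c| + 2*|ψ|) * (1 - Real.cos (2*ψ)) := mul_le_mul_of_nonneg_right hadd hcψ
    _ = |c| * (1 - Real.cos (2*ψ)) + 2*|ψ| * (1 - Real.cos (2*ψ)) := by ring
    _ ≤ |c| * (2*|ψ|) + 2*|ψ| * 2 := add_le_add
        (mul_le_mul_of_nonneg_left h4 (abs_nonneg c))
        (mul_le_mul_of_nonneg_left hcb (by positivity))
    _ = (2*|c| + 4) * |ψ| := by ring
  have hT2 : |(c + (ψ - Real.sin ψ * Real.cos ψ)) * (1 - Real.cos (2*ψ))/x^4| ≤ (2*|c|+4)/a^4 * N := by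
    rw [abs_div, abs_of_nonneg (by positivity : (0:ℝ) ≤ x^4)]
    have hx4 : a^4 ≤ x^4 := pow_le_pow_left₀ ha.le hx 4
    have hnum : |(c + (ψ - Real.sin ψ * Real.cos ψ)) * (1 - Real.cos (2*ψ))| ≤ (2*|c|+4) * N :=
      hT2num.trans (by nlinarith [abs_nonneg c])
    calc |(c + (ψ - Real.sin ψ * Real.cos ψ)) * (1 - Real.cos (2*ψ))| / x^4
        ≤ ((2*|c|+4)*N) / a^4 := div_le_div₀ (by positivity) hnum (by positivity) hx4
    _ = (2*|c|+4)/a^4 * N := by ring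
  have hT3 : |(2/x) * φ' x| ≤ 2/a * N := by
    rw [abs_mul, abs_of_nonneg (by positivity : (0:ℝ) ≤ 2/x)]
    have h2x : 2/x ≤ 2/a := by apply div_le_div_of_nonneg_left (by norm_num) ha hx
    exact mul_le_mul h2x h2 (abs_nonneg _) (by positivity)
  have hK1 : (0:ℝ) ≤ 2/a + 2/a^2 + (2*|c|+4)/a^4 := by positivity
  apply max_le
  · nlinarith
  · rw [hφ'']
    have habs : |Real.sin (2*ψ)/x^2 +
        (c + (ψ - Real.sin ψ * Real.cos ψ)) * (1 - Real.cos (2*ψ))/x^4 - (2/x) * φ' x|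
        ≤ |Real.sin (2*ψ)/x^2| +
          |(c + (ψ - Real.sin ψ * Real.cos ψ)) * (1 - Real.cos (2*ψ))/x^4| + |(2/x) * φ' x| := by
      calc _ ≤ |Real.sin (2*ψ)/x^2 +
            (c + (ψ - Real.sin ψ * Real.cos ψ)) * (1 - Real.cos (2*ψ))/x^4| + |(2/x) * φ' x| :=
          abs_sub _ _
      _ ≤ _ := by gcongr; exact abs_add_le _ _
    nlinarith

lemma ode_const_forward (φ φ' φ'' : ℝ → ℝ)
    (hd1 : ∀ r ∈ Set.Ioi (0:ℝ), HasDerivAt φ (φ' r) r)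
    (hd2 : ∀ r ∈ Set.Ioi (0:ℝ), HasDerivAt φ' (φ'' r) r)
    (heq : ∀ r ∈ Set.Ioi (0:ℝ),
      φ'' r + (2/r) * φ' r =
        Real.sin (2 * φ r) / r^2 +
          (φ r - Real.sin (φ r) * Real.cos (φ r)) * (1 - Real.cos (2 * φ r)) / r^4)
    (c : ℝ) (m : ℤ) (hc : c = (m:ℝ) * π)
    {r₁ : ℝ} (hr₁ : 0 < r₁) (hφ : φ r₁ = c) (hφ' : φ' r₁ = 0) :
    ∀ x, r₁ ≤ x → φ x = c := by
  intro b hb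
  set K := 1 + 2/r₁ + 2/r₁^2 + (2*|c| + 4)/r₁^4 with hK
  set f : ℝ → ℝ × ℝ := fun t => (φ t - c, φ' t) with hf
  have hcont : ContinuousOn f (Icc r₁ b) := by
    intro t ht
    have ht0 : (0:ℝ) < t := lt_of_lt_of_le hr₁ ht.1
    exact (((hd1 t ht0).continuousAt.sub continuousAt_const).prodMk
      (hd2 t ht0).continuousAt).continuousWithinAt
  have hderiv : ∀ t ∈ Ico r₁ b, HasDerivWithinAt f ((φ' t, φ'' t)) (Ici t) t := by
    intro t ht
    have ht0 : (0:ℝ) < t := lt_of_lt_of_le hr₁ ht.1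
    exact (((hd1 t ht0).sub_const c).prodMk (hd2 t ht0)).hasDerivWithinAt
  have hbound : ∀ t ∈ Ico r₁ b, ‖((φ' t, φ'' t) : ℝ × ℝ)‖ ≤ K * ‖f t‖ + 0 := by
    intro t ht
    rw [add_zero]
    exact ode_est φ φ' φ'' heq c m hc r₁ hr₁ ht.1
  have ha0 : ‖f r₁‖ ≤ 0 := by simp [hf, hφ, hφ']
  have hres := norm_le_gronwallBound_of_norm_deriv_right_le hcont hderiv ha0 hbound b
    ⟨hb, le_refl b⟩
  rw [gronwallBound_ε0_δ0] at hres
  have : f b = 0 := norm_le_zero_iff.mp hres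
  have := congrArg Prod.fst this
  simpa [hf, sub_eq_zero] using this

lemma ode_const_backward (φ φ' φ'' : ℝ → ℝ)
    (hd1 : ∀ r ∈ Set.Ioi (0:ℝ), HasDerivAt φ (φ' r) r)
    (hd2 : ∀ r ∈ Set.Ioi (0:ℝ), HasDerivAt φ' (φ'' r) r)
    (heq : ∀ r ∈ Set.Ioi (0:ℝ),
      φ'' r + (2/r) * φ' r =
        Real.sin (2 * φ r) / r^2 +
          (φ r - Real.sin (φ r) * Real.cos (φ r)) * (1 - Real.cos (2 * φ r)) / r^4)
    (c : ℝ) (m : ℤ) (hc : c = (m:ℝ) * π)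
    {r₁ : ℝ} (hφ : φ r₁ = c) (hφ' : φ' r₁ = 0) :
    ∀ x, 0 < x → x ≤ r₁ → φ x = c := by
  intro a ha0 ha
  set K := 1 + 2/a + 2/a^2 + (2*|c| + 4)/a^4 with hK
  set g : ℝ → ℝ × ℝ := fun t => (φ (a + r₁ - t) - c, φ' (a + r₁ - t)) with hg
  have hmem : ∀ t, a ≤ t → t ≤ r₁ → (a ≤ a + r₁ - t ∧ 0 < a + r₁ - t ∧ a + r₁ - t ≤ r₁) :=
    fun t h1 h2 => ⟨by linarith, by linarith, by linarith⟩
  have hσ : ∀ t : ℝ, HasDerivAt (fun s : ℝ => a + r₁ - s) (-1) t := by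
    intro t
    simpa using (hasDerivAt_id t).const_sub (a + r₁)
  have hcont : ContinuousOn g (Icc a r₁) := by
    intro t ht
    obtain ⟨h1', h2', h3'⟩ := hmem t ht.1 ht.2
    have hc1 : ContinuousAt (fun s : ℝ => a + r₁ - s) t := (hσ t).continuousAt
    exact ((((hd1 _ h2').continuousAt.comp hc1).sub continuousAt_const).prodMk
      ((hd2 _ h2').continuousAt.comp hc1)).continuousWithinAt
  have hderiv : ∀ t ∈ Ico a r₁, HasDerivWithinAt g
      ((-1 : ℝ) • ((φ' (a + r₁ - t), φ'' (a + r₁ - t)) : ℝ × ℝ)) (Ici t) t := by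
    intro t ht
    obtain ⟨h1', h2', h3'⟩ := hmem t ht.1 ht.2.le
    have hF : HasDerivAt (fun s => ((φ s - c, φ' s) : ℝ × ℝ))
        ((φ' (a + r₁ - t), φ'' (a + r₁ - t))) (a + r₁ - t) :=
      ((hd1 _ h2').sub_const c).prodMk (hd2 _ h2')
    exact (HasDerivAt.scomp t hF (hσ t)).hasDerivWithinAt
  have hbound : ∀ t ∈ Ico a r₁,
      ‖(-1 : ℝ) • ((φ' (a + r₁ - t), φ'' (a + r₁ - t)) : ℝ × ℝ)‖ ≤ K * ‖g t‖ + 0 := by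
    intro t ht
    obtain ⟨h1', h2', h3'⟩ := hmem t ht.1 ht.2.le
    rw [add_zero, norm_smul]
    simp only [norm_neg, norm_one, one_mul]
    have := ode_est φ φ' φ'' heq c m hc a ha0 h1'
    simpa [hg] using this
  have ha' : ‖g a‖ ≤ 0 := by simp [hg, show a + r₁ - a = r₁ by ring, hφ, hφ']
  have hres := norm_le_gronwallBound_of_norm_deriv_right_le hcont hderiv ha' hbound r₁
    ⟨ha, le_refl r₁⟩
  rw [gronwallBound_ε0_δ0] at hres
  have hz : g r₁ = 0 := norm_le_zero_iff.mp hres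
  have := congrArg Prod.fst hz
  simpa [hg, show a + r₁ - r₁ = a by ring, sub_eq_zero] using this

theorem stmt5 (φ φ' φ'' : ℝ → ℝ) (n : ℕ) (hn : 1 ≤ n)
    (hd1 : ∀ r ∈ Set.Ioi (0:ℝ), HasDerivAt φ (φ' r) r)
    (hd2 : ∀ r ∈ Set.Ioi (0:ℝ), HasDerivAt φ' (φ'' r) r)
    (heq : ∀ r ∈ Set.Ioi (0:ℝ),
      φ'' r + (2/r) * φ' r =
        Real.sin (2 * φ r) / r^2 +
          (φ r - Real.sin (φ r) * Real.cos (φ r)) * (1 - Real.cos (2 * φ r)) / r^4)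
    (hnonconst : ∃ a b : ℝ, 0 < a ∧ 0 < b ∧ φ a ≠ φ b)
    (h0 : Filter.Tendsto φ (nhdsWithin 0 (Set.Ioi 0)) (nhds 0))
    (hinf : Filter.Tendsto φ Filter.atTop (nhds ((n : ℝ) * Real.pi)))
    (hW0 : Filter.Tendsto (Wfun φ φ') (nhdsWithin 0 (Set.Ioi 0)) (nhds 0))
    (hWinf : Filter.Tendsto (Wfun φ φ') Filter.atTop
      (nhds (-((n : ℝ)^2 * Real.pi^2)))) :
    ∀ r > 0, 0 < φ r ∧ φ r < (n : ℝ) * Real.pi := by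
  have hπ : (0:ℝ) < π := Real.pi_pos
  have hn1 : (1:ℝ) ≤ (n:ℝ) := by exact_mod_cast hn
  have hnπ : (0:ℝ) < (n:ℝ) * π := by nlinarith
  have hder : ∀ r ∈ Set.Ioi (0:ℝ), HasDerivAt (Wfun φ φ') (-4 * r * Real.sin (φ r)^2) r :=
    fun r hr => Wfun_hasDerivAt φ φ' φ'' hd1 hd2 heq hr
  have hanti : AntitoneOn (Wfun φ φ') (Set.Ioi 0) := by
    apply antitoneOn_of_deriv_nonpos (convex_Ioi 0)
    · exact fun r hr => (hder r hr).continuousAt.continuousWithinAt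
    · rw [interior_Ioi]
      exact fun r hr => (hder r hr).differentiableAt.differentiableWithinAt
    · intro r hr
      rw [interior_Ioi] at hr
      rw [(hder r hr).deriv]
      have : (0:ℝ) < r := hr
      nlinarith [sq_nonneg (Real.sin (φ r))]
  have hWle : ∀ r, 0 < r → Wfun φ φ' r ≤ 0 := by
    intro r hr
    refine ge_of_tendsto hW0 ?_
    filter_upwards [Ioo_mem_nhdsGT_of_mem (left_mem_Ico.mpr hr)] with x hx
    exact hanti hx.1 hr hx.2.le
  have hWge : ∀ r, 0 < r → -((n:ℝ)^2 * π^2) ≤ Wfun φ φ' r := by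
    intro r hr
    refine le_of_tendsto hWinf ?_
    filter_upwards [Filter.eventually_ge_atTop r] with x hx
    exact hanti (mem_Ioi.mpr hr) (mem_Ioi.mpr (lt_of_lt_of_le hr hx)) hx
  have hφcont : ∀ s t : ℝ, 0 < s → ContinuousOn φ (Icc s t) := fun s t hs x hx =>
    ((hd1 x (lt_of_lt_of_le hs hx.1)).continuousAt).continuousWithinAt
  -- Claim A : φ r ≤ nπ
  have claimA : ∀ r, 0 < r → φ r ≤ (n:ℝ) * π := by
    by_contra hcon
    push_neg at hcon
    obtain ⟨r₀, hr₀pos, hlt⟩ := hcon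
    obtain ⟨R₀, hR₀⟩ := Filter.eventually_atTop.mp (hinf.eventually (gt_mem_nhds hlt))
    set b := max R₀ (r₀ + 1) with hb
    have hr₀b : r₀ < b := lt_of_lt_of_le (lt_add_one r₀) (le_max_right _ _)
    have hφb : φ b < φ r₀ := hR₀ b (le_max_left _ _)
    have h0' : ∀ᶠ x in nhdsWithin 0 (Set.Ioi 0), φ x < φ r₀ :=
      h0.eventually (gt_mem_nhds (lt_trans hnπ hlt))
    have hioo : Ioo (0:ℝ) r₀ ∈ nhdsWithin 0 (Set.Ioi 0) :=
      Ioo_mem_nhdsGT_of_mem (left_mem_Ico.mpr hr₀pos)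
    obtain ⟨a, hafr, ha0, har₀⟩ := (h0'.and (Filter.eventually_of_mem hioo (fun x hx => hx))).exists
    have hab : a ≤ b := by linarith
    obtain ⟨rs, hrsmem, hmax⟩ := isCompact_Icc.exists_isMaxOn
      (⟨r₀, har₀.le, hr₀b.le⟩ : (Icc a b).Nonempty) (hφcont a b ha0)
    have hfrs : φ r₀ ≤ φ rs := hmax ⟨har₀.le, hr₀b.le⟩
    have hane : rs ≠ a := by
      intro h; rw [h] at hfrs; exact absurd (lt_of_lt_of_le hafr hfrs) (lt_irrefl _)
    have hbne : rs ≠ b := by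
      intro h; rw [h] at hfrs; exact absurd (lt_of_lt_of_le hφb hfrs) (lt_irrefl _)
    have hrsI : rs ∈ Ioo a b :=
      ⟨lt_of_le_of_ne hrsmem.1 (Ne.symm hane), lt_of_le_of_ne hrsmem.2 hbne⟩
    have hrs0 : 0 < rs := lt_trans ha0 hrsI.1
    have hlocal : IsLocalMax φ rs := hmax.isLocalMax (Icc_mem_nhds hrsI.1 hrsI.2)
    have hd0 : φ' rs = 0 := hlocal.hasDerivAt_eq_zero (hd1 rs hrs0)
    have hgt : (n:ℝ) * π < φ rs := lt_of_lt_of_le hlt hfrs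
    have hg := g_gt n (φ rs) hgt
    have hWr := hWge rs hrs0
    have hwv : Wfun φ φ' rs = -(2 * rs^2 * Real.sin (φ rs)^2) -
        (φ rs - Real.sin (φ rs) * Real.cos (φ rs))^2 := by
      simp only [Wfun, hd0]; ring
    rw [hwv] at hWr
    nlinarith [mul_self_lt_mul_self hnπ.le hg, sq_nonneg (rs * Real.sin (φ rs))]
  -- Claim A strict : φ r < nπ
  have claimAs : ∀ r, 0 < r → φ r < (n:ℝ) * π := by
    intro r hr
    rcases lt_or_eq_of_le (claimA r hr) with h | h
    · exact h
    exfalso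
    have hev : ∀ᶠ x in nhds r, φ x ≤ φ r := by
      filter_upwards [Ioi_mem_nhds hr] with x hx
      rw [h]; exact claimA x hx
    have hloc : IsLocalMax φ r := hev
    have hd0 : φ' r = 0 := hloc.hasDerivAt_eq_zero (hd1 r hr)
    have hback := ode_const_backward φ φ' φ'' hd1 hd2 heq ((n:ℝ) * π) (n:ℤ)
      (by push_cast; ring) h hd0
    have hT : Filter.Tendsto φ (nhdsWithin 0 (Set.Ioi 0)) (nhds ((n:ℝ) * π)) := by
      apply Filter.Tendsto.congr' ?_ tendsto_const_nhds
      filter_upwards [Ioo_mem_nhdsGT_of_mem (left_mem_Ico.mpr hr)] with x hx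
      exact (hback x hx.1 hx.2.le).symm
    have := tendsto_nhds_unique hT h0
    nlinarith
  -- Claim B : 0 < φ r
  have claimB : ∀ r, 0 < r → 0 < φ r := by
    intro r hr
    by_contra hcon
    push_neg at hcon
    obtain ⟨R₀, hR₀⟩ := Filter.eventually_atTop.mp (hinf.eventually (lt_mem_nhds hnπ))
    set R := max R₀ r with hR
    have hφR : 0 < φ R := hR₀ R (le_max_left _ _)
    have hrR : r ≤ R := le_max_right _ _
    obtain ⟨r₁, hr₁mem, hφr₁⟩ := intermediate_value_Icc hrR (hφcont r R hr)
      (⟨hcon, hφR.le⟩ : (0:ℝ) ∈ Icc (φ r) (φ R))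
    have hr₁0 : 0 < r₁ := lt_of_lt_of_le hr hr₁mem.1
    have hw : Wfun φ φ' r₁ = r₁^4 * (φ' r₁)^2 := by simp [Wfun, hφr₁]
    have hle := hWle r₁ hr₁0
    have hd0 : φ' r₁ = 0 := by
      have h4 : (0:ℝ) < r₁^4 := by positivity
      have hsq : (φ' r₁)^2 ≤ 0 := by nlinarith
      have := le_antisymm hsq (sq_nonneg _)
      exact sq_eq_zero_iff.mp this
    have hfwd := ode_const_forward φ φ' φ'' hd1 hd2 heq 0 0 (by norm_num) hr₁0 hφr₁ hd0
    have hT : Filter.Tendsto φ Filter.atTop (nhds 0) := by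
      apply Filter.Tendsto.congr' ?_ tendsto_const_nhds
      filter_upwards [Filter.eventually_ge_atTop r₁] with x hx
      exact (hfwd x hx).symm
    have := tendsto_nhds_unique hT hinf
    nlinarith
  intro r hr
  exact ⟨claimB r hr, claimAs r hr⟩
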